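/- In the algebra U_{q^{1/2}}(sl_2) with Chevalley generators K, K^{-1}, E, F (relations KK^{-1}=K^{-1}K=1, KE = qEK, KF = q^{-1}FK, EF - FE = (K - K^{-1})/(q^{1/2} - q^{-1/2})), the elements X = K^{-1} + K^{-1}E(q-1), Y = K, Z = K^{-1} - F q^{-1/2}(q-1) satisfy the equitable relations (qXY - YX)/(q-1) = 1, (qYZ - ZY)/(q-1) = 1, (qZX - XZ)/(q-1) = 1. -/

import Mathlib

set_option maxHeartbeats 1000000 in
/-- In any associative unital `ℂ`-algebra, if `K, K⁻¹, E, F` satisfy the Chevalley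
relations of `U_{q^{1/2}}(sl₂)` (`KK⁻¹ = K⁻¹K = 1`, `KE = qEK`, `KF = q⁻¹FK`,
`EF - FE = (K - K⁻¹)/(q^{1/2} - q^{-1/2})`), then
`X = K⁻¹ + K⁻¹E(q-1)`, `Y = K`, `Z = K⁻¹ - F q^{-1/2}(q-1)` satisfy the equitable
relations `(qXY - YX)/(q-1) = 1`, `(qYZ - ZY)/(q-1) = 1`, `(qZX - XZ)/(q-1) = 1`. -/
theorem stmt_15 (Alg : Type*) [Ring Alg] [Algebra ℂ Alg]
    (s : ℂ) (hs : s ≠ 0) (q : ℂ) (hq : q = s ^ 2) (hq0 : q ≠ 0) (hq1 : q ≠ 1)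
    (K Kinv E F : Alg)
    (hK : K * Kinv = 1) (hK' : Kinv * K = 1)
    (hKE : K * E = q • (E * K)) (hKF : K * F = q⁻¹ • (F * K))
    (hEF : E * F - F * E = (s - s⁻¹)⁻¹ • (K - Kinv)) :
    let X : Alg := Kinv + (q - 1) • (Kinv * E)
    let Y : Alg := K
    let Z : Alg := Kinv - (s⁻¹ * (q - 1)) • F
    (q - 1)⁻¹ • (q • (X * Y) - Y * X) = 1 ∧
    (q - 1)⁻¹ • (q • (Y * Z) - Z * Y) = 1 ∧
    (q - 1)⁻¹ • (q • (Z * X) - X * Z) = 1 := by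
  intro X Y Z
  have hq1' : q - 1 ≠ 0 := sub_ne_zero.mpr hq1
  have m1 : Kinv * E = q⁻¹ • (E * Kinv) := by
    have h : E * Kinv = q • (Kinv * E) := by
      calc E * Kinv = Kinv * (K * E) * Kinv := by rw [← mul_assoc, hK', one_mul]
        _ = q • (Kinv * (E * (K * Kinv))) := by
              rw [hKE, mul_smul_comm, smul_mul_assoc]
              rw [mul_assoc, mul_assoc]
        _ = q • (Kinv * E) := by rw [hK, mul_one]
    rw [h, smul_smul, inv_mul_cancel₀ hq0, one_smul]
  have m2 : Kinv * F = q • (F * Kinv) := by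
    have h : F * Kinv = q⁻¹ • (Kinv * F) := by
      calc F * Kinv = Kinv * (K * F) * Kinv := by rw [← mul_assoc, hK', one_mul]
        _ = q⁻¹ • (Kinv * (F * (K * Kinv))) := by
              rw [hKF, mul_smul_comm, smul_mul_assoc]
              rw [mul_assoc, mul_assoc]
        _ = q⁻¹ • (Kinv * F) := by rw [hK, mul_one]
    rw [h, smul_smul, mul_inv_cancel₀ hq0, one_smul]
  have m1' : ∀ x : Alg, Kinv * (E * x) = q⁻¹ • (E * (Kinv * x)) := fun x => by
    rw [← mul_assoc, m1, smul_mul_assoc, mul_assoc]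
  have m2' : ∀ x : Alg, Kinv * (F * x) = q • (F * (Kinv * x)) := fun x => by
    rw [← mul_assoc, m2, smul_mul_assoc, mul_assoc]
  have k1 : K * E = q • (E * K) := hKE
  have k2 : K * F = q⁻¹ • (F * K) := hKF
  have k1' : ∀ x : Alg, K * (E * x) = q • (E * (K * x)) := fun x => by
    rw [← mul_assoc, hKE, smul_mul_assoc, mul_assoc]
  have k2' : ∀ x : Alg, K * (F * x) = q⁻¹ • (F * (K * x)) := fun x => by
    rw [← mul_assoc, hKF, smul_mul_assoc, mul_assoc]
  have c1 : ∀ x : Alg, K * (Kinv * x) = x := fun x => by rw [← mul_assoc, hK, one_mul]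
  have c2 : ∀ x : Alg, Kinv * (K * x) = x := fun x => by rw [← mul_assoc, hK', one_mul]
  have hcc : (s - s⁻¹)⁻¹ = s * (s ^ 2 - 1)⁻¹ := by
    rw [show s - s⁻¹ = (s ^ 2 - 1) * s⁻¹ by field_simp, mul_inv, inv_inv, mul_comm]
  have hEF' : E * F = F * E + (s - s⁻¹)⁻¹ • (K - Kinv) := by rw [← hEF]; abel
  have hEFK : ∀ x : Alg, E * (F * x) = F * (E * x) + (s - s⁻¹)⁻¹ • (K * x - Kinv * x) := fun x => by
    rw [← mul_assoc, ← mul_assoc, hEF', add_mul, smul_mul_assoc, sub_mul]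
  subst hq
  refine ⟨?_, ?_, ?_⟩
  · show (s ^ 2 - 1)⁻¹ • ((s ^ 2) • ((Kinv + (s ^ 2 - 1) • (Kinv * E)) * K)
      - K * (Kinv + (s ^ 2 - 1) • (Kinv * E))) = 1
    rw [inv_smul_eq_iff₀ hq1']
    simp only [mul_add, add_mul, mul_sub, sub_mul, smul_mul_assoc, mul_smul_comm, smul_smul,
      smul_sub, smul_add, mul_assoc, m1, m1', m2, m2', k1, k1', k2, k2', c1, c2, hK, hK',
      mul_one, one_mul]
    match_scalars <;> field_simp <;> try ring
  · show (s ^ 2 - 1)⁻¹ • ((s ^ 2) • (K * (Kinv - (s⁻¹ * (s ^ 2 - 1)) • F))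
      - (Kinv - (s⁻¹ * (s ^ 2 - 1)) • F) * K) = 1
    rw [inv_smul_eq_iff₀ hq1']
    simp only [mul_add, add_mul, mul_sub, sub_mul, smul_mul_assoc, mul_smul_comm, smul_smul,
      smul_sub, smul_add, mul_assoc, m1, m1', m2, m2', k1, k1', k2, k2', c1, c2, hK, hK',
      mul_one, one_mul]
    match_scalars <;> field_simp <;> try ring
  · show (s ^ 2 - 1)⁻¹ • ((s ^ 2) • ((Kinv - (s⁻¹ * (s ^ 2 - 1)) • F) * (Kinv + (s ^ 2 - 1) • (Kinv * E))) -
      (Kinv + (s ^ 2 - 1) • (Kinv * E)) * (Kinv - (s⁻¹ * (s ^ 2 - 1)) • F)) = 1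
    rw [inv_smul_eq_iff₀ hq1']
    simp only [mul_add, add_mul, mul_sub, sub_mul, smul_mul_assoc, mul_smul_comm, smul_smul,
      smul_sub, smul_add, mul_assoc, m1, m1', m2, m2', k1, k1', k2, k2', c1, c2, hK, hK',
      mul_one, one_mul, hEFK, hcc]
    match_scalars <;> field_simp <;> try ring
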